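/- Let T > 0, let μ be a finite Borel measure on [0,T], let a ≥ 0, and let u : [0,T] → ℝ be a continuous nonnegative function such that u(t) ≤ a + ∫_{[0,t)} u dμ for every t ∈ [0,T]. Then u(t) ≤ a · exp( μ([0,t)) ) for every t ∈ [0,T]. -/

import Mathlib

open MeasureTheory Set Filter Topology

noncomputable def gmF (μ : Measure ℝ) (y : ℝ) : ℝ := (μ (Set.Ico 0 y)).toReal

lemma gmF_nonneg (μ : Measure ℝ) (y : ℝ) : 0 ≤ gmF μ y := ENNReal.toReal_nonneg

lemma gmF_mono (μ : Measure ℝ) [IsFiniteMeasure μ] : Monotone (gmF μ) := by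
  intro x y h
  exact ENNReal.toReal_mono (measure_ne_top μ _)
    (measure_mono (Set.Ico_subset_Ico_right h))

lemma gmF_measurable (μ : Measure ℝ) [IsFiniteMeasure μ] : Measurable (gmF μ) :=
  (gmF_mono μ).measurable

lemma gmF_lower (μ : Measure ℝ) [IsFiniteMeasure μ] {t s : ℝ} (hs : 0 < s)
    (hst : s ≤ gmF μ t) :
    s ≤ (μ {y | y ∈ Set.Ico 0 t ∧ gmF μ y < s}).toReal := by
  set F := gmF μ with hF
  have ht : 0 < t := by
    by_contra h
    push_neg at h
    have : F t = 0 := by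
      simp [hF, gmF, Set.Ico_eq_empty (by exact fun hlt => absurd (hlt.trans_le h) (lt_irrefl 0))]
    linarith
  set S := {y | y ∈ Set.Ico 0 t ∧ F y < s} with hS
  set C := {c : ℝ | c ∈ Set.Icc 0 t ∧ F c < s} with hC
  have hC0 : (0:ℝ) ∈ C := by
    constructor
    · exact ⟨le_refl 0, ht.le⟩
    · simpa [hF, gmF] using hs
  have hCbdd : BddAbove C := ⟨t, fun c hc => hc.1.2⟩
  set c0 := sSup C with hc0
  have hc0mem : 0 ≤ c0 := le_csSup hCbdd hC0
  have hc0le : c0 ≤ t := csSup_le ⟨0, hC0⟩ fun c hc => hc.1.2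
  have hsub : Set.Ico 0 c0 ⊆ S := by
    intro y hy
    obtain ⟨c, hcC, hyc⟩ := exists_lt_of_lt_csSup ⟨0, hC0⟩ hy.2
    exact ⟨⟨hy.1, hyc.trans_le hcC.1.2⟩, lt_of_le_of_lt (gmF_mono μ hyc.le) hcC.2⟩
  have hSmeas : (μ S).toReal ≥ F c0 := by
    exact ENNReal.toReal_mono (measure_ne_top μ _) (measure_mono hsub)
  by_cases hcase : s ≤ F c0
  · linarith
  push_neg at hcase
  have hc0lt : c0 < t := by
    rcases lt_or_eq_of_le hc0le with h | h
    · exact h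
    · exact absurd (h ▸ hst) (not_le.mpr hcase)
  have hsub2 : Set.Icc 0 c0 ⊆ S := by
    intro y hy
    rcases lt_or_eq_of_le hy.2 with h | h
    · exact hsub ⟨hy.1, h⟩
    · subst h
      exact ⟨⟨hy.1, hc0lt⟩, hcase⟩
  refine le_trans ?_ (ENNReal.toReal_mono (measure_ne_top μ _) (measure_mono hsub2))
  -- s ≤ μ (Icc 0 c0)
  by_contra hcon
  push_neg at hcon
  -- continuity from above
  set c : ℕ → ℝ := fun n => c0 + (t - c0) / (n + 1) with hc
  have hcpos : ∀ n, c0 < c n := by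
    intro n
    have : 0 < (t - c0) / (n + 1) := div_pos (by linarith) (by positivity)
    simp [hc]; linarith
  have hcle : ∀ n, c n ≤ t := by
    intro n
    have h1 : (t - c0) / (n + 1) ≤ t - c0 := by
      apply div_le_self (by linarith)
      simp only [le_add_iff_nonneg_left]
      positivity
    simp [hc]; linarith
  have hanti : Antitone (fun n : ℕ => Set.Ico (0:ℝ) (c n)) := by
    intro m n h
    apply Set.Ico_subset_Ico_right
    simp only [hc]
    have : (m:ℝ) + 1 ≤ n + 1 := by exact_mod_cast by omega
    gcongr
  have hiInter : (⋂ n, Set.Ico (0:ℝ) (c n)) = Set.Icc 0 c0 := by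
    ext y
    simp only [Set.mem_iInter, Set.mem_Ico, Set.mem_Icc]
    constructor
    · intro h
      refine ⟨(h 0).1, ?_⟩
      by_contra hy
      push_neg at hy
      have hlim : Tendsto c atTop (𝓝 c0) := by
        have : Tendsto (fun n : ℕ => (t - c0) / (n + 1)) atTop (𝓝 0) :=
          tendsto_const_nhds.div_atTop (tendsto_natCast_atTop_atTop.atTop_add tendsto_const_nhds)
        simpa [hc] using tendsto_const_nhds.add this
      have := hlim.eventually_lt_const hy
      obtain ⟨n, hn⟩ := this.exists
      exact absurd ((h n).2) (not_lt.mpr hn.le)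
    · intro h n
      exact ⟨h.1, lt_of_le_of_lt h.2 (hcpos n)⟩
  have hlimm : Tendsto (fun n => μ (Set.Ico (0:ℝ) (c n))) atTop (𝓝 (μ (Set.Icc 0 c0))) := by
    have := tendsto_measure_iInter_atTop (μ := μ)
      (fun n => (measurableSet_Ico).nullMeasurableSet) hanti ⟨0, measure_ne_top μ _⟩
    rw [hiInter] at this
    exact this
  have hlimr : Tendsto (fun n => F (c n)) atTop (𝓝 ((μ (Set.Icc 0 c0)).toReal)) :=
    (ENNReal.tendsto_toReal (measure_ne_top μ _)).comp hlimm
  have := hlimr.eventually_lt_const hcon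
  obtain ⟨n, hn⟩ := this.exists
  have : c n ∈ C := ⟨⟨by linarith [hcpos n], hcle n⟩, hn⟩
  exact absurd (le_csSup hCbdd this) (not_le.mpr (hcpos n))

lemma gmF_key (μ : Measure ℝ) [IsFiniteMeasure μ] (t : ℝ) (n : ℕ) :
    ∫ y in Set.Ico 0 t, gmF μ y ^ n ∂μ ≤ gmF μ t ^ (n + 1) / (n + 1) := by
  set F := gmF μ with hF
  rcases Nat.eq_zero_or_pos n with hn | hn
  · subst hn
    simp only [pow_zero, pow_one, Nat.cast_zero, zero_add, div_one]
    rw [setIntegral_const]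
    simp [hF, gmF]
    exact le_rfl
  -- n ≥ 1
  have hn0 : (n : ℝ) ≠ 0 := Nat.cast_ne_zero.mpr hn.ne'
  have hn1 : (0:ℝ) < (n:ℝ) + 1 := by positivity
  set c : ℝ := F t ^ n with hc
  have hc0 : 0 ≤ c := pow_nonneg (gmF_nonneg μ t) n
  set f : ℝ → ℝ := fun y => F y ^ n with hf
  have hfm : Measurable f := (gmF_measurable μ).pow_const n
  set B : ℝ := (μ Set.univ).toReal with hB
  have hFB : ∀ y, F y ≤ B := fun y =>
    ENNReal.toReal_mono (measure_ne_top μ _) (measure_mono (Set.subset_univ _))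
  have hfi : Integrable f (μ.restrict (Set.Ico 0 t)) := by
    refine Integrable.mono' (integrable_const (B ^ n)) hfm.aestronglyMeasurable
      (Filter.Eventually.of_forall fun y => ?_)
    rw [Real.norm_eq_abs, abs_of_nonneg (pow_nonneg (gmF_nonneg μ y) n)]
    exact pow_le_pow_left₀ (gmF_nonneg μ y) (hFB y) n
  have hlc := hfi.integral_eq_integral_meas_lt
    (Filter.Eventually.of_forall fun y => pow_nonneg (gmF_nonneg μ y) n)
  rw [hlc]
  set g : ℝ → ℝ := fun r => ((μ.restrict (Set.Ico 0 t)) {a | r < f a}).toReal with hg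
  set h : ℝ → ℝ := (Set.Ioc 0 c).indicator (fun r => F t - r ^ ((n:ℝ)⁻¹)) with hh
  have hsetm : ∀ r : ℝ, MeasurableSet {a | r < f a} :=
    fun r => measurableSet_lt measurable_const hfm
  have hgh : ∀ r ∈ Set.Ioi (0:ℝ), g r ≤ h r := by
    intro r hr
    have hr0 : (0:ℝ) < r := hr
    show ((μ.restrict (Set.Ico 0 t)) {a | r < f a}).toReal ≤ h r
    rw [Measure.restrict_apply (hsetm r)]
    by_cases hrc : c ≤ r
    · have hempty : {a | r < f a} ∩ Set.Ico 0 t = ∅ := by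
        rw [Set.eq_empty_iff_forall_notMem]
        rintro y ⟨hy, hy0, hyt⟩
        exact absurd hy (not_lt.mpr ((pow_le_pow_left₀ (gmF_nonneg μ y)
          (gmF_mono μ hyt.le) n).trans hrc))
      rw [hempty]
      simp only [measure_empty, ENNReal.toReal_zero, hh]
      apply Set.indicator_nonneg
      intro r' hr'
      have h1 : r' ^ ((n:ℝ)⁻¹) ≤ c ^ ((n:ℝ)⁻¹) := Real.rpow_le_rpow hr'.1.le hr'.2 (by positivity)
      have hcr : c ^ ((n:ℝ)⁻¹) = F t := by
        rw [hc, ← Real.rpow_natCast (F t) n, ← Real.rpow_mul (gmF_nonneg μ t),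
          mul_inv_cancel₀ hn0, Real.rpow_one]
      rw [hcr] at h1
      linarith
    · push_neg at hrc
      set s : ℝ := r ^ ((n:ℝ)⁻¹) with hs
      have hs0 : 0 < s := Real.rpow_pos_of_pos hr0 _
      have hsn : s ^ n = r := by
        rw [hs, ← Real.rpow_natCast (r ^ ((n:ℝ)⁻¹)) n, ← Real.rpow_mul hr0.le,
          inv_mul_cancel₀ hn0, Real.rpow_one]
      have hsFt : s < F t := by
        have hcr : c ^ ((n:ℝ)⁻¹) = F t := by
          rw [hc, ← Real.rpow_natCast (F t) n, ← Real.rpow_mul (gmF_nonneg μ t),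
            mul_inv_cancel₀ hn0, Real.rpow_one]
        calc s < c ^ ((n:ℝ)⁻¹) := Real.rpow_lt_rpow hr0.le hrc (by positivity)
        _ = F t := hcr
      have hlow := gmF_lower μ hs0 hsFt.le
      set S : Set ℝ := {y | y ∈ Set.Ico 0 t ∧ F y < s} with hSdef
      have hSm : MeasurableSet S := by
        have : S = Set.Ico 0 t ∩ {y | F y < s} := by ext y; simp [hSdef, Set.mem_setOf_eq, and_comm]
        rw [this]
        exact measurableSet_Ico.inter (measurableSet_lt (gmF_measurable μ) measurable_const)
      set A : Set ℝ := {a | r < f a} ∩ Set.Ico 0 t with hA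
      have hdisj : Disjoint A S := by
        rw [Set.disjoint_left]
        rintro y ⟨hy1, _⟩ ⟨_, hy2⟩
        have : f y < r := by
          rw [← hsn]
          exact pow_lt_pow_left₀ hy2 (gmF_nonneg μ y) hn.ne'
        exact absurd hy1 (not_lt.mpr this.le)
      have hsum : μ A + μ S ≤ μ (Set.Ico 0 t) := by
        rw [← measure_union hdisj hSm]
        apply measure_mono
        apply Set.union_subset
        · exact fun y hy => hy.2
        · exact fun y hy => hy.1
      have hsum' : (μ A).toReal + (μ S).toReal ≤ F t := by
        rw [← ENNReal.toReal_add (measure_ne_top μ _) (measure_ne_top μ _)]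
        exact ENNReal.toReal_mono (measure_ne_top μ _) hsum
      have : (μ A).toReal ≤ F t - s := by linarith
      calc (μ ({a | r < f a} ∩ Set.Ico 0 t)).toReal = (μ A).toReal := rfl
      _ ≤ F t - s := this
      _ = h r := by rw [hh, Set.indicator_of_mem (Set.mem_Ioc.mpr ⟨hr0, hrc.le⟩)]
  have hhint : Integrable h (volume.restrict (Set.Ioi (0:ℝ))) := by
    apply Integrable.restrict
    rw [hh, integrable_indicator_iff measurableSet_Ioc]
    refine Integrable.mono' (integrable_const (F t)) ?_ ?_
    · apply Measurable.aestronglyMeasurable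
      exact measurable_const.sub (Real.continuous_rpow_const (by positivity)).measurable
    · rw [ae_restrict_iff' measurableSet_Ioc]
      refine Filter.Eventually.of_forall fun r hr => ?_
      rw [Real.norm_eq_abs, abs_sub_le_iff]
      constructor
      · have : 0 ≤ r ^ ((n:ℝ)⁻¹) := Real.rpow_nonneg hr.1.le _
        linarith [gmF_nonneg μ t]
      · have h1 : r ^ ((n:ℝ)⁻¹) ≤ c ^ ((n:ℝ)⁻¹) :=
          Real.rpow_le_rpow hr.1.le hr.2 (by positivity)
        have hcr : c ^ ((n:ℝ)⁻¹) = F t := by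
          rw [hc, ← Real.rpow_natCast (F t) n, ← Real.rpow_mul (gmF_nonneg μ t),
            mul_inv_cancel₀ hn0, Real.rpow_one]
        have h2 : 0 ≤ F t := gmF_nonneg μ t
        rw [hcr] at h1
        linarith
  have hmono : ∫ r in Set.Ioi (0:ℝ), g r ≤ ∫ r in Set.Ioi (0:ℝ), h r := by
    refine integral_mono_of_nonneg ?_ hhint ?_
    · exact Filter.Eventually.of_forall fun r => ENNReal.toReal_nonneg
    · filter_upwards [ae_restrict_mem measurableSet_Ioi] with r hr using hgh r hr
  refine hmono.trans ?_
  -- compute the integral of h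
  have hind : ∫ r in Set.Ioi (0:ℝ), h r = ∫ r in Set.Ioc 0 c, (F t - r ^ ((n:ℝ)⁻¹)) := by
    rw [hh, setIntegral_indicator measurableSet_Ioc,
      Set.inter_eq_self_of_subset_right Set.Ioc_subset_Ioi_self]
  rw [hind, ← intervalIntegral.integral_of_le hc0]
  have hiir : IntervalIntegrable (fun r : ℝ => r ^ ((n:ℝ)⁻¹)) volume 0 c :=
    intervalIntegral.intervalIntegrable_rpow (Or.inl (by positivity))
  rw [intervalIntegral.integral_sub intervalIntegrable_const hiir]
  rw [intervalIntegral.integral_const, integral_rpow (Or.inl (lt_of_lt_of_le neg_one_lt_zero (by positivity)))]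
  have hcpow : c ^ ((n:ℝ)⁻¹ + 1) = F t ^ (n + 1) := by
    rw [hc, ← Real.rpow_natCast (F t) n, ← Real.rpow_mul (gmF_nonneg μ t)]
    rw [← Real.rpow_natCast (F t) (n+1)]
    congr 1
    push_cast
    field_simp
    ring
  rw [Real.zero_rpow (ne_of_gt (by positivity)), hcpow, sub_zero, sub_zero, smul_eq_mul, hc,
    ← pow_succ]
  apply le_of_eq
  have hne : (n:ℝ)⁻¹ + 1 ≠ 0 := ne_of_gt (by positivity)
  field_simp
  ring

/-- Gronwall inequality with respect to a finite Borel measure `μ` on the time interval: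
if `u(t) ≤ a + ∫_{[0,t)} u dμ` on `[0,T]`, then `u(t) ≤ a · exp(μ([0,t)))`. -/
theorem gronwall_measure
    (T : ℝ) (hT : 0 < T) (μ : Measure ℝ) [IsFiniteMeasure μ]
    (a : ℝ) (ha : 0 ≤ a) (u : ℝ → ℝ)
    (hu : ContinuousOn u (Set.Icc 0 T))
    (hunonneg : ∀ t ∈ Set.Icc 0 T, 0 ≤ u t)
    (hbound : ∀ t ∈ Set.Icc 0 T, u t ≤ a + ∫ y in Set.Ico 0 t, u y ∂μ) :
    ∀ t ∈ Set.Icc 0 T, u t ≤ a * Real.exp ((μ (Set.Ico 0 t)).toReal) := by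
  set F := gmF μ with hF
  obtain ⟨M, hM⟩ := (isCompact_Icc (a := (0:ℝ)) (b := T)).exists_bound_of_continuousOn hu
  have hM0 : 0 ≤ M := le_trans (norm_nonneg _) (hM 0 ⟨le_refl 0, hT.le⟩)
  have hint : ∀ (t : ℝ) (k : ℕ), Integrable (fun y => F y ^ k) (μ.restrict (Set.Ico 0 t)) := by
    intro t k
    refine Integrable.mono' (integrable_const ((μ Set.univ).toReal ^ k))
      ((gmF_measurable μ).pow_const k).aestronglyMeasurable
      (Filter.Eventually.of_forall fun y => ?_)
    rw [Real.norm_eq_abs, abs_of_nonneg (pow_nonneg (gmF_nonneg μ y) k)]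
    exact pow_le_pow_left₀ (gmF_nonneg μ y)
      (ENNReal.toReal_mono (measure_ne_top μ _) (measure_mono (Set.subset_univ _))) k
  have hP : ∀ n : ℕ, ∀ t ∈ Set.Icc 0 T,
      u t ≤ a * ∑ k ∈ Finset.range n, F t ^ k / k.factorial
        + M * (F t ^ n / n.factorial) := by
    intro n
    induction n with
    | zero =>
      intro t ht
      simpa using le_trans (le_abs_self (u t)) (hM t ht)
    | succ n ih =>
      intro t ht
      have hsub : Set.Ico 0 t ⊆ Set.Icc 0 T := fun y hy => ⟨hy.1, hy.2.le.trans ht.2⟩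
      set G : ℝ → ℝ := fun y =>
        a * ∑ k ∈ Finset.range n, F y ^ k / k.factorial + M * (F y ^ n / n.factorial) with hG
      have hintG : Integrable G (μ.restrict (Set.Ico 0 t)) := by
        apply Integrable.add
        · apply Integrable.const_mul
          apply integrable_finset_sum
          intro k _
          exact (hint t k).div_const _
        · exact ((hint t n).div_const _).const_mul _
      have h1 : u t ≤ a + ∫ y in Set.Ico 0 t, G y ∂μ := by
        refine (hbound t ht).trans (add_le_add (le_refl a) ?_)
        refine integral_mono_of_nonneg ?_ hintG ?_
        · filter_upwards [ae_restrict_mem measurableSet_Ico] with y hy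
            using hunonneg y (hsub hy)
        · filter_upwards [ae_restrict_mem measurableSet_Ico] with y hy
            using ih y (hsub hy)
      have h2 : ∫ y in Set.Ico 0 t, G y ∂μ
          = a * ∑ k ∈ Finset.range n, (∫ y in Set.Ico 0 t, F y ^ k ∂μ) / k.factorial
            + M * ((∫ y in Set.Ico 0 t, F y ^ n ∂μ) / n.factorial) := by
        rw [hG, integral_add (by
            apply Integrable.const_mul
            apply integrable_finset_sum
            intro k _
            exact (hint t k).div_const _)
          (((hint t n).div_const _).const_mul _)]
        rw [integral_const_mul, integral_const_mul, integral_div,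
          integral_finset_sum _ (fun k _ => (hint t k).div_const _)]
        congr 2
        · exact Finset.sum_congr rfl fun k _ => integral_div _ _
      have h3 : u t ≤ a + (a * ∑ k ∈ Finset.range n, (F t ^ (k+1) / (k+1)) / k.factorial
            + M * ((F t ^ (n+1) / (n+1)) / n.factorial)) := by
        refine h1.trans ?_
        rw [h2]
        have hterm : ∀ k : ℕ, (∫ y in Set.Ico 0 t, F y ^ k ∂μ) / (k.factorial : ℝ)
            ≤ (F t ^ (k+1) / (k+1)) / (k.factorial : ℝ) := fun k =>
          div_le_div_of_nonneg_right (gmF_key μ t k)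
            (by exact_mod_cast k.factorial_pos.le)
        have hsumle := Finset.sum_le_sum (fun k (_ : k ∈ Finset.range n) => hterm k)
        have h4 := mul_le_mul_of_nonneg_left hsumle ha
        have h5 := mul_le_mul_of_nonneg_left (hterm n) hM0
        linarith
      refine h3.trans (le_of_eq ?_)
      rw [Finset.sum_range_succ']
      have hfact : ∀ k : ℕ, ((k+1).factorial : ℝ) = (k+1) * k.factorial := by
        intro k
        rw [Nat.factorial_succ]
        push_cast
        ring
      have hsum : ∀ k ∈ Finset.range n, (F t ^ (k+1) / (k+1)) / k.factorial
          = F t ^ (k+1) / (k+1).factorial := by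
        intro k _
        rw [hfact k, div_div]
      rw [Finset.sum_congr rfl hsum]
      simp only [pow_zero, Nat.factorial_zero, Nat.cast_one, div_one]
      rw [hfact n, div_div]
      ring
  intro t ht
  have hlim1 : Tendsto (fun n => ∑ k ∈ Finset.range n, F t ^ k / k.factorial) atTop
      (𝓝 (Real.exp (F t))) := by
    rw [Real.exp_eq_exp_ℝ]
    exact (NormedSpace.expSeries_div_hasSum_exp (𝔸 := ℝ) (F t)).tendsto_sum_nat
  have hlim2 : Tendsto (fun n : ℕ => F t ^ n / (n.factorial : ℝ)) atTop (𝓝 0) :=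
    FloorSemiring.tendsto_pow_div_factorial_atTop (F t)
  have hlim : Tendsto (fun n : ℕ => a * ∑ k ∈ Finset.range n, F t ^ k / k.factorial
      + M * (F t ^ n / n.factorial)) atTop (𝓝 (a * Real.exp (F t) + M * 0)) :=
    (hlim1.const_mul a).add (hlim2.const_mul M)
  have := ge_of_tendsto hlim (Filter.Eventually.of_forall fun n => hP n t ht)
  simpa [hF, gmF] using this
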